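/- Let 0 < ε ≤ δ and set U_ε^δ := {(x,y) ∈ ℝ × (0,∞) : |x| ≤ δ/2 and max(2|x|, ε) < y ≤ δ}. Then for all real x₁, x₂ with r := |x₁ − x₂|, the hyperbolic measure of the intersection of the two horizontal translates satisfies λ((U_ε^δ + x₁) ∩ (U_ε^δ + x₂)) = R_ε^δ(r), where R_ε^δ(r) := ln(δ/ε) − (1/ε − 1/δ)·r if r ≤ ε; R_ε^δ(r) := ln(δ/r) + r/δ − 1 if ε ≤ r ≤ δ; and R_ε^δ(r) := 0 if r ≥ δ. -/

import Mathlib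

open MeasureTheory

/-- The hyperbolic measure `λ(A) = ∬_A y⁻² dx dy` on the upper half-plane
`ℍ = {(x,y) : y > 0}`. -/
noncomputable def hypMeasure : Measure (ℝ × ℝ) :=
  (volume.restrict {p : ℝ × ℝ | 0 < p.2}).withDensity fun p => ENNReal.ofReal (1 / p.2 ^ 2)

/-- The horizontal translate `A + t = {(x + t, y) : (x, y) ∈ A}`. -/
def htrans (A : Set (ℝ × ℝ)) (t : ℝ) : Set (ℝ × ℝ) := {p : ℝ × ℝ | (p.1 - t, p.2) ∈ A}

/-- The truncated region
`U_ε^δ := {(x,y) ∈ ℝ × (0,∞) : |x| ≤ δ/2 ∧ max(2|x|, ε) < y ≤ δ}`. -/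
def Utrunc (ε δ : ℝ) : Set (ℝ × ℝ) :=
  {p : ℝ × ℝ | |p.1| ≤ δ / 2 ∧ max (2 * |p.1|) ε < p.2 ∧ p.2 ≤ δ}

/-- The piecewise covariance function `R_ε^δ`. -/
noncomputable def Rcov (ε δ r : ℝ) : ℝ :=
  if r ≤ ε then Real.log (δ / ε) - (1 / ε - 1 / δ) * r
  else if r ≤ δ then Real.log (δ / r) + r / δ - 1
  else 0

/-- For `0 < ε ≤ δ` and all real `x₁, x₂` with `r := |x₁ − x₂|`, the hyperbolic measure of the
intersection of the two horizontal translates of `U_ε^δ` equals `R_ε^δ(r)`. -/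
theorem hypMeasure_inter_htrans_Utrunc (ε δ : ℝ) (hε : 0 < ε) (hεδ : ε ≤ δ) (x₁ x₂ : ℝ) :
    hypMeasure (htrans (Utrunc ε δ) x₁ ∩ htrans (Utrunc ε δ) x₂) =
      ENNReal.ofReal (Rcov ε δ |x₁ - x₂|) := by
  have hδ0 : 0 < δ := lt_of_lt_of_le hε hεδ
  set r := |x₁ - x₂| with hrdef
  have hr0 : 0 ≤ r := abs_nonneg _
  set S := htrans (Utrunc ε δ) x₁ ∩ htrans (Utrunc ε δ) x₂ with hSdef
  -- measurability of S
  have hU : MeasurableSet (Utrunc ε δ) := by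
    have : Utrunc ε δ = {p : ℝ × ℝ | |p.1| ≤ δ / 2} ∩
        ({p : ℝ × ℝ | max (2 * |p.1|) ε < p.2} ∩ {p : ℝ × ℝ | p.2 ≤ δ}) := rfl
    rw [this]
    exact (measurableSet_le (by fun_prop) measurable_const).inter
      ((measurableSet_lt (by fun_prop) (by fun_prop)).inter
        (measurableSet_le (by fun_prop) measurable_const))
  have hht : ∀ t : ℝ, MeasurableSet (htrans (Utrunc ε δ) t) := by
    intro t
    have h : htrans (Utrunc ε δ) t = (fun p : ℝ × ℝ => (p.1 - t, p.2)) ⁻¹' Utrunc ε δ := rfl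
    rw [h]
    exact hU.preimage (by fun_prop)
  have hSm : MeasurableSet S := (hht x₁).inter (hht x₂)
  have hSsub : S ⊆ {p : ℝ × ℝ | 0 < p.2} := by
    rintro p ⟨h1, _⟩
    exact hε.trans (lt_of_le_of_lt (le_max_right _ _) h1.2.1)
  -- the density function
  set f : ℝ × ℝ → ENNReal := fun q => ENNReal.ofReal (1 / q.2 ^ 2) with hfdef
  have hfm : Measurable f := by fun_prop
  -- cross sections
  have hcross : ∀ y : ℝ, ε < y → y ≤ δ →
      {x : ℝ | (x, y) ∈ S} =
        Set.Ioo (x₁ - y / 2) (x₁ + y / 2) ∩ Set.Ioo (x₂ - y / 2) (x₂ + y / 2) := by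
    intro y hεy hyδ
    ext x
    simp only [hSdef, htrans, Utrunc, Set.mem_setOf_eq, Set.mem_inter_iff, Set.mem_Ioo]
    constructor
    · rintro ⟨⟨_, hm1, _⟩, ⟨_, hm2, _⟩⟩
      have h1 : 2 * |x - x₁| < y := lt_of_le_of_lt (le_max_left _ _) hm1
      have h2 : 2 * |x - x₂| < y := lt_of_le_of_lt (le_max_left _ _) hm2
      have a1 := abs_sub_lt_iff.mp (show |x - x₁| < y / 2 by linarith)
      have a2 := abs_sub_lt_iff.mp (show |x - x₂| < y / 2 by linarith)
      exact ⟨⟨by linarith [a1.2], by linarith [a1.1]⟩, ⟨by linarith [a2.2], by linarith [a2.1]⟩⟩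
    · rintro ⟨⟨b1, b2⟩, ⟨b3, b4⟩⟩
      have a1 : |x - x₁| < y / 2 := abs_sub_lt_iff.mpr ⟨by linarith, by linarith⟩
      have a2 : |x - x₂| < y / 2 := abs_sub_lt_iff.mpr ⟨by linarith, by linarith⟩
      exact ⟨⟨by linarith, max_lt (by linarith) hεy, hyδ⟩,
        ⟨by linarith, max_lt (by linarith) hεy, hyδ⟩⟩
  have hcross_empty : ∀ y : ℝ, ¬(ε < y ∧ y ≤ δ) → {x : ℝ | (x, y) ∈ S} = ∅ := by
    intro y hy
    ext x
    simp only [hSdef, htrans, Utrunc, Set.mem_setOf_eq, Set.mem_inter_iff, Set.mem_empty_iff_false,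
      iff_false]
    rintro ⟨⟨_, hm1, hyd⟩, _⟩
    exact hy ⟨lt_of_le_of_lt (le_max_right _ _) hm1, hyd⟩
  -- reduce to an iterated integral
  have key : hypMeasure S = ∫⁻ y : ℝ, ∫⁻ x : ℝ, S.indicator f (x, y) := by
    rw [hypMeasure, withDensity_apply _ hSm, Measure.restrict_restrict hSm,
      Set.inter_eq_left.mpr hSsub, ← lintegral_indicator hSm, Measure.volume_eq_prod,
      MeasureTheory.lintegral_prod_symm _ (hfm.indicator hSm).aemeasurable]
  set m := max ε r with hmdef
  have hm0 : 0 < m := lt_of_lt_of_le hε (le_max_left _ _)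
  -- compute the inner integral pointwise
  have inner : ∀ y : ℝ, (∫⁻ x : ℝ, S.indicator f (x, y)) =
      (Set.Ioc m δ).indicator (fun y : ℝ => ENNReal.ofReal (1 / y ^ 2 * (y - r))) y := by
    intro y
    have hrew : (fun x : ℝ => S.indicator f (x, y)) =
        ({x : ℝ | (x, y) ∈ S}).indicator (fun _ => ENNReal.ofReal (1 / y ^ 2)) := by
      ext x
      rfl
    have hsecm : MeasurableSet {x : ℝ | (x, y) ∈ S} := hSm.preimage measurable_prodMk_right
    rw [hrew, lintegral_indicator_const hsecm]
    by_cases hy : ε < y ∧ y ≤ δ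
    · rw [hcross y hy.1 hy.2, Set.Ioo_inter_Ioo, Real.volume_Ioo]
      have hlen : (x₁ + y / 2) ⊓ (x₂ + y / 2) - (x₁ - y / 2) ⊔ (x₂ - y / 2) = y - r := by
        rw [min_add_add_right, max_sub_sub_right]
        have habs : x₁ ⊔ x₂ - x₁ ⊓ x₂ = |x₁ - x₂| := by
          rw [max_comm, min_comm]; exact max_sub_min_eq_abs x₂ x₁
        rw [hrdef]
        linarith [habs]
      rw [hlen]
      by_cases hry : r < y
      · rw [Set.indicator_of_mem (Set.mem_Ioc.mpr ⟨max_lt hy.1 hry, hy.2⟩),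
          ← ENNReal.ofReal_mul (by positivity)]
      · have h1 : y - r ≤ 0 := by linarith [not_lt.mp hry]
        have h2 : y ≤ m := le_max_of_le_right (not_lt.mp hry)
        rw [Set.indicator_of_notMem (by simp [Set.mem_Ioc]; intro h; exact absurd h (not_lt.mpr h2)),
          ENNReal.ofReal_eq_zero.mpr h1, mul_zero]
    · rw [hcross_empty y hy, measure_empty, mul_zero,
        Set.indicator_of_notMem (by
          simp only [Set.mem_Ioc, not_and_or] at hy ⊢
          rcases hy with h | h
          · exact Or.inl (fun hc => h (lt_of_le_of_lt (le_max_left _ _) hc))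
          · exact Or.inr h)]
  rw [key]
  simp_rw [inner]
  rw [lintegral_indicator measurableSet_Ioc]
  -- now a one-dimensional computation
  by_cases hrδ : r ≤ δ
  · have hmδ : m ≤ δ := max_le hεδ hrδ
    set g : ℝ → ℝ := fun y => 1 / y ^ 2 * (y - r) with hgdef
    have hgcont : ContinuousOn g (Set.Icc m δ) := by
      apply ContinuousOn.mul
      · exact continuousOn_const.div (continuousOn_pow 2)
          (fun y hy => pow_ne_zero _ (ne_of_gt (lt_of_lt_of_le hm0 hy.1)))
      · exact (continuous_id.sub continuous_const).continuousOn
    have hint : IntegrableOn g (Set.Ioc m δ) := by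
      exact (hgcont.integrableOn_Icc).mono_set Set.Ioc_subset_Icc_self
    have hnn : 0 ≤ᶠ[ae (volume.restrict (Set.Ioc m δ))] g := by
      refine (ae_restrict_iff' measurableSet_Ioc).mpr (ae_of_all _ fun y hy => ?_)
      have hy1 : r ≤ y := le_of_lt (lt_of_le_of_lt (le_max_right ε r) hy.1)
      have hy0 : 0 < y := lt_trans hm0 hy.1
      have : (0:ℝ) ≤ y - r := by linarith
      positivity
    rw [← ofReal_integral_eq_lintegral_ofReal hint hnn]
    congr 1
    have hiv : ∫ y in Set.Ioc m δ, g y = ∫ y in m..δ, g y :=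
      (intervalIntegral.integral_of_le hmδ).symm
    have hftc : ∫ y in m..δ, g y = (Real.log δ + r / δ) - (Real.log m + r / m) := by
      apply intervalIntegral.integral_eq_sub_of_hasDerivAt
      · intro y hy
        rw [Set.uIcc_of_le hmδ] at hy
        have hy0 : 0 < y := lt_of_lt_of_le hm0 hy.1
        have h1 : HasDerivAt Real.log y⁻¹ y := Real.hasDerivAt_log (ne_of_gt hy0)
        have h2 : HasDerivAt (fun y : ℝ => r / y) (-(r / y ^ 2)) y := by
          simpa [div_eq_mul_inv] using ((hasDerivAt_inv (ne_of_gt hy0)).const_mul r)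
        have := h1.add h2
        convert this using 1
        · rfl
        rw [hgdef]
        field_simp
        ring
      · exact (hgcont.mono (by rw [Set.uIcc_of_le hmδ])).intervalIntegrable
    rw [hiv, hftc, Rcov]
    by_cases hrε : r ≤ ε
    · have hmε : m = ε := max_eq_left hrε
      rw [if_pos hrε, hmε, Real.log_div (ne_of_gt hδ0) (ne_of_gt hε)]
      ring
    · have hmr : m = r := max_eq_right (le_of_not_ge hrε)
      have hr0' : 0 < r := lt_of_lt_of_le hε (le_of_not_ge hrε)
      rw [if_neg hrε, if_pos hrδ, hmr, Real.log_div (ne_of_gt hδ0) (ne_of_gt hr0'),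
        div_self (ne_of_gt hr0')]
      ring
  · have hempty : Set.Ioc m δ = ∅ := by
      apply Set.Ioc_eq_empty
      exact not_lt.mpr (le_max_of_le_right (le_of_lt (lt_of_not_ge hrδ)))
    rw [hempty, Measure.restrict_empty, lintegral_zero_measure, Rcov,
      if_neg (fun h => hrδ (h.trans hεδ)), if_neg hrδ, ENNReal.ofReal_zero]
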